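/- Let a > 1, μ coprime to 2a², d ≡ μ² (mod 4a²) a positive integer, α ∈ {1, −1}, and (p,q) integers with p² − d q² = 4a/α and p ≡ μ q (mod 2a). Then gcd(a, p) = 1, gcd(a, q) = 1, and gcd(p, q) divides 2; moreover if a is even then gcd(p,q) = 1. -/

import Mathlib

theorem stmt_9 (a d μ α p q : ℤ) (ha : 1 < a)
    (hμ : IsCoprime μ (2 * a ^ 2)) (hd : 0 < d)
    (hdμ : d ≡ μ ^ 2 [ZMOD 4 * a ^ 2]) (hα : α = 1 ∨ α = -1)
    (hpq : p ^ 2 - d * q ^ 2 = 4 * a * α)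
    (hcong : p ≡ μ * q [ZMOD 2 * a]) :
    IsCoprime a p ∧ IsCoprime a q ∧ (Int.gcd p q : ℤ) ∣ 2 ∧
      (Even a → Int.gcd p q = 1) := by
  obtain ⟨t, ht⟩ := hcong.dvd
  obtain ⟨m, hm⟩ := hdμ.dvd
  have hp : p = μ * q - 2 * a * t := by linarith
  have hdd : d = μ ^ 2 - 4 * a ^ 2 * m := by linarith
  have ha0 : (4 : ℤ) * a ≠ 0 := by positivity
  have key : a * (t ^ 2 + m * q ^ 2) - μ * q * t = α := by
    apply mul_left_cancel₀ ha0
    subst hp hdd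
    linear_combination hpq
  have hα2 : α * α = 1 := by rcases hα with h | h <;> subst h <;> ring
  have hq : IsCoprime a q := ⟨α * (t ^ 2 + m * q ^ 2), -(α * μ * t), by
    linear_combination α * key + hα2⟩
  have hcp : IsCoprime a p := ⟨α * (m * q ^ 2 - t ^ 2), -(α * t), by
    subst hp; linear_combination α * key + hα2⟩
  refine ⟨hcp, hq, ?_⟩
  have hgp : (Int.gcd p q : ℤ) ∣ p := Int.gcd_dvd_left p q
  have hgq : (Int.gcd p q : ℤ) ∣ q := Int.gcd_dvd_right p q
  have hsq : (Int.gcd p q : ℤ) ^ 2 ∣ 4 * a := by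
    have h1 : (Int.gcd p q : ℤ) ^ 2 ∣ p ^ 2 - d * q ^ 2 :=
      dvd_sub (pow_dvd_pow_of_dvd hgp 2) ((pow_dvd_pow_of_dvd hgq 2).mul_left d)
    rw [hpq] at h1
    rcases hα with h | h <;> subst h
    · simpa using h1
    · simpa using h1.neg_right
  have hcg : IsCoprime ((Int.gcd p q : ℤ) ^ 2) a :=
    ((hq.of_isCoprime_of_dvd_right hgq).pow_right).symm
  have h4 : (Int.gcd p q : ℤ) ^ 2 ∣ 4 := hcg.dvd_of_dvd_mul_right hsq
  have h4n : Int.gcd p q ^ 2 ∣ 4 := by exact_mod_cast h4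
  have hle : Int.gcd p q ≤ 4 := Nat.le_of_dvd (by norm_num) (dvd_trans (dvd_pow_self _ two_ne_zero) h4n)
  have hg2 : Int.gcd p q ∣ 2 := by interval_cases h : Int.gcd p q <;> omega
  refine ⟨by exact_mod_cast hg2, ?_⟩
  intro he
  rcases (Nat.dvd_prime Nat.prime_two).mp hg2 with h1 | h2
  · exact h1
  · exfalso
    have h2q : (2 : ℤ) ∣ q := by rw [h2] at hgq; exact_mod_cast hgq
    have h2a : (2 : ℤ) ∣ a := by obtain ⟨b, hb⟩ := he; exact ⟨b, by omega⟩
    have := hq.isUnit_of_dvd' h2a h2q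
    rw [Int.isUnit_iff] at this
    omega
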